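/- For all a > 0 and q ≠ 0, the function g(t) defined for t > 0 by g(t) = −(√a₁/(π(√a₁+√a₂)))·(d/dt)∫₀ᵗ exp(−q²/(4a₂τ))·(1/(√τ√(t−τ))) dτ equals −(√a₁/(√a₁+√a₂))·(|q|/(2√(πa₂)))·t^{−3/2}·exp(−q²/(4a₂t)), for any a₁, a₂ > 0. -/

import Mathlib

open Real MeasureTheory Set

lemma aux_bound {k : ℝ} (hk : 0 < k) {s : ℝ} (hs : s ∈ Set.Ioo (0:ℝ) 1) :
    Real.exp (-k/s) / (s * Real.sqrt s) ≤ 6 / k^3 := by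
  obtain ⟨hs0, hs1⟩ := hs
  have hss : Real.sqrt s ≥ s := by
    nlinarith [Real.sq_sqrt hs0.le, Real.sqrt_nonneg s, Real.sqrt_le_one.mpr hs1.le]
  have h1 : Real.exp (-k/s) / (s * Real.sqrt s) ≤ Real.exp (-k/s) / (s * s) := by
    apply div_le_div_of_nonneg_left (Real.exp_pos _).le (by positivity)
    nlinarith
  refine h1.trans ?_
  have hks : 0 < k / s := by positivity
  have hexp : (k/s)^3 / 6 ≤ Real.exp (k/s) := by
    have h4 := Real.sum_le_exp_of_nonneg hks.le 4
    have hsum : ∑ i ∈ Finset.range 4, (k/s)^i / i.factorial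
        = 1 + (k/s) + (k/s)^2/2 + (k/s)^3/6 := by
      norm_num [Finset.sum_range_succ, Nat.factorial]
    rw [hsum] at h4
    nlinarith [hks.le, sq_nonneg (k/s)]
  have hexp' : Real.exp (-k/s) ≤ 6 * s^3 / k^3 := by
    rw [neg_div, Real.exp_neg, inv_le_iff_one_le_mul₀ (Real.exp_pos _)]
    calc (1:ℝ) = (6 * s^3/k^3) * ((k/s)^3/6) := by field_simp
      _ ≤ (6 * s^3/k^3) * Real.exp (k/s) := by
          apply mul_le_mul_of_nonneg_left hexp; positivity
  calc Real.exp (-k/s) / (s*s) ≤ (6*s^3/k^3) / (s*s) := by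
        apply div_le_div_of_nonneg_right hexp' (by positivity)
    _ = 6 * s / k^3 := by field_simp
    _ ≤ 6 / k^3 := by
        apply div_le_div_of_nonneg_right ?_ (by positivity)
        nlinarith

lemma aux_integrable : IntegrableOn (fun s => 1 / Real.sqrt (1 - s)) (Set.Ioo (0:ℝ) 1) := by
  have h : IntervalIntegrable (fun x : ℝ => x ^ (-(1:ℝ)/2)) volume 0 1 :=
    intervalIntegral.intervalIntegrable_rpow' (by norm_num)
  have h2 := (h.comp_sub_left 1).symm
  norm_num at h2
  rw [intervalIntegrable_iff_integrableOn_Ioo_of_le (by norm_num)] at h2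
  apply h2.congr_fun ?_ measurableSet_Ioo
  intro s hs
  obtain ⟨hs0, hs1⟩ := hs
  have h1s : (0:ℝ) < 1 - s := by linarith
  simp only [Real.rpow_neg h1s.le, one_div, Real.sqrt_eq_rpow]

lemma subst1 (c t : ℝ) (ht : 0 < t) :
    (∫ τ in Set.Ioo (0:ℝ) t, Real.exp (-c/τ) * (1/(Real.sqrt τ * Real.sqrt (t-τ))))
      = ∫ s in Set.Ioo (0:ℝ) 1,
          Real.exp (-c/(t*s)) * (1/(Real.sqrt s * Real.sqrt (1-s))) := by
  have himg : (fun s : ℝ => t*s) '' Set.Ioo 0 1 = Set.Ioo (0:ℝ) t := by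
    have := Set.image_mul_left_Ioo ht (0:ℝ) 1
    simpa using this
  have hinj : Set.InjOn (fun s : ℝ => t*s) (Set.Ioo 0 1) :=
    fun a _ b _ h => mul_left_cancel₀ ht.ne' h
  rw [← himg, integral_image_eq_integral_abs_deriv_smul (f' := fun _ => t)
      measurableSet_Ioo
      (fun x _ => (by simpa using ((hasDerivAt_id x).const_mul t).hasDerivWithinAt :
        HasDerivWithinAt (fun s : ℝ => t*s) t (Set.Ioo 0 1) x)) hinj]
  apply setIntegral_congr_fun measurableSet_Ioo
  intro s hs
  obtain ⟨hs0, hs1⟩ := hs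
  have h1s : (0:ℝ) < 1 - s := by linarith
  have hst : Real.sqrt t ≠ 0 := by positivity
  have hss : Real.sqrt s ≠ 0 := by positivity
  have h1ss : Real.sqrt (1-s) ≠ 0 := by positivity
  simp only [smul_eq_mul]
  rw [show t - t*s = t*(1-s) by ring]
  rw [Real.sqrt_mul ht.le s, Real.sqrt_mul ht.le (1-s), abs_of_pos ht]
  rw [show Real.sqrt t * Real.sqrt s * (Real.sqrt t * Real.sqrt (1-s))
      = (Real.sqrt t * Real.sqrt t) * (Real.sqrt s * Real.sqrt (1-s)) by ring,
    Real.mul_self_sqrt ht.le]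
  field_simp

lemma subst2 (c t : ℝ) (hc : 0 < c) (ht : 0 < t) :
    (∫ s in Set.Ioo (0:ℝ) 1, (c/(t^2*s)) *
        (Real.exp (-c/(t*s)) * (1/(Real.sqrt s * Real.sqrt (1-s)))))
      = Real.sqrt π * Real.sqrt c * t ^ (-(3:ℝ)/2) * Real.exp (-c/t) := by
  have ht32 : t ^ (-(3:ℝ)/2) = 1/(t * Real.sqrt t) := by
    rw [show (-(3:ℝ)/2) = -(3/2) by norm_num, Real.rpow_neg ht.le,
      show ((3:ℝ)/2) = 1 + 1/2 by norm_num, Real.rpow_add ht, Real.rpow_one,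
      ← Real.sqrt_eq_rpow, one_div]
  have himg : (fun w : ℝ => c/(c+t*w^2)) '' Set.Ioi 0 = Set.Ioo (0:ℝ) 1 := by
    ext y
    constructor
    · rintro ⟨w, hw, rfl⟩
      have hw : (0:ℝ) < w := hw
      have hd : (0:ℝ) < c + t*w^2 := by positivity
      refine ⟨by positivity, ?_⟩
      rw [div_lt_one hd]
      have : (0:ℝ) < t*w^2 := by positivity
      linarith
    · rintro ⟨hy0, hy1⟩
      refine ⟨Real.sqrt (c*(1-y)/(t*y)), ?_, ?_⟩
      · have : (0:ℝ) < c*(1-y)/(t*y) := by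
          apply div_pos (by nlinarith) (by positivity)
        exact Real.sqrt_pos.mpr this
      · have hsq : Real.sqrt (c*(1-y)/(t*y)) ^ 2 = c*(1-y)/(t*y) := by
          apply Real.sq_sqrt
          apply le_of_lt
          apply div_pos (by nlinarith) (by positivity)
        simp only [hsq]
        have h1y : (0:ℝ) < 1 - y := by linarith
        rw [div_eq_iff (by positivity : c + t*(c*(1-y)/(t*y)) ≠ 0)]
        field_simp
        ring
  have hinj : Set.InjOn (fun w : ℝ => c/(c+t*w^2)) (Set.Ioi 0) := by
    intro a ha b hb h
    simp only at h
    have ha : (0:ℝ) < a := ha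
    have hb : (0:ℝ) < b := hb
    have hda : (0:ℝ) < c + t*a^2 := by positivity
    have hdb : (0:ℝ) < c + t*b^2 := by positivity
    rw [div_eq_div_iff hda.ne' hdb.ne'] at h
    have h4 : a^2 = b^2 := by
      have h5 : c*(t*b^2) = c*(t*a^2) := by ring_nf; ring_nf at h; linarith
      have h6 := mul_left_cancel₀ hc.ne' h5
      exact (mul_left_cancel₀ ht.ne' h6).symm
    apply le_antisymm <;> nlinarith [h4]
  have hderiv : ∀ x ∈ Set.Ioi (0:ℝ),
      HasDerivWithinAt (fun w : ℝ => c/(c+t*w^2))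
        (-(2*c*t*x)/(c+t*x^2)^2) (Set.Ioi 0) x := by
    intro x hx
    have hd : (0:ℝ) < c + t*x^2 := by positivity
    have h1 : HasDerivAt (fun w : ℝ => c + t*w^2) (2*t*x) x := by
      have := (hasDerivAt_const x c).add (((hasDerivAt_pow 2 x)).const_mul t)
      exact this.congr_deriv (by norm_num; ring)
    have h2 := (hasDerivAt_const x c).div h1 hd.ne'
    have h3 : (0 * (c+t*x^2) - c * (2*t*x))/(c+t*x^2)^2 = -(2*c*t*x)/(c+t*x^2)^2 := by
      ring
    rw [h3] at h2
    exact h2.hasDerivWithinAt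
  rw [← himg, integral_image_eq_integral_abs_deriv_smul
      (f' := fun w => -(2*c*t*w)/(c+t*w^2)^2) measurableSet_Ioi hderiv hinj]
  have hpt : ∀ w ∈ Set.Ioi (0:ℝ),
      |(-(2*c*t*w)/(c+t*w^2)^2)| •
        ((c/(t^2*(c/(c+t*w^2)))) *
          (Real.exp (-c/(t*(c/(c+t*w^2)))) *
            (1/(Real.sqrt (c/(c+t*w^2)) * Real.sqrt (1-c/(c+t*w^2))))))
      = (2 * Real.sqrt c * (1/(t*Real.sqrt t)) * Real.exp (-c/t)) * Real.exp (-1*w^2) := by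
    intro w hw
    have hw : (0:ℝ) < w := hw
    have hd : (0:ℝ) < c + t*w^2 := by positivity
    rw [neg_one_mul]
    have hE : -c/(t*(c/(c+t*w^2))) = -c/t + -(w^2) := by
      field_simp
      ring
    rw [hE, Real.exp_add]
    have h1s : 1 - c/(c+t*w^2) = t*w^2/(c+t*w^2) := by
      field_simp
      ring
    rw [h1s, Real.sqrt_div hc.le, Real.sqrt_div (by positivity : (0:ℝ) ≤ t*w^2),
      Real.sqrt_mul ht.le, Real.sqrt_sq hw.le, abs_div, abs_neg,
      abs_of_pos (by positivity : (0:ℝ) < 2*c*t*w),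
      abs_of_pos (by positivity : (0:ℝ) < (c+t*w^2)^2), smul_eq_mul]
    have hcc : Real.sqrt c * Real.sqrt c = c := Real.mul_self_sqrt hc.le
    have htt : Real.sqrt t * Real.sqrt t = t := Real.mul_self_sqrt ht.le
    have hdd : Real.sqrt (c+t*w^2) * Real.sqrt (c+t*w^2) = c + t*w^2 :=
      Real.mul_self_sqrt hd.le
    have hsc : Real.sqrt c ≠ 0 := by positivity
    have hst : Real.sqrt t ≠ 0 := by positivity
    have hsd : Real.sqrt (c+t*w^2) ≠ 0 := by positivity
    field_simp
    ring_nf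
    rw [Real.sq_sqrt hc.le]
    rw [Real.sq_sqrt hd.le]
    ring
  rw [setIntegral_congr_fun measurableSet_Ioi hpt, MeasureTheory.integral_const_mul,
    integral_gaussian_Ioi, ht32]
  rw [div_one]
  ring

lemma aux_bound3 {k : ℝ} (hk : 0 < k) {s : ℝ} (hs : s ∈ Set.Ioo (0:ℝ) 1) :
    (1/s) * (Real.exp (-k/s) * (1/(Real.sqrt s * Real.sqrt (1-s))))
      ≤ (6/k^3) * (1/Real.sqrt (1-s)) := by
  obtain ⟨hs0, hs1⟩ := hs
  have h := aux_bound hk ⟨hs0, hs1⟩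
  have h1s : (0:ℝ) < 1 - s := by linarith
  have heq : (1/s) * (Real.exp (-k/s) * (1/(Real.sqrt s * Real.sqrt (1-s))))
      = (Real.exp (-k/s) / (s * Real.sqrt s)) * (1/Real.sqrt (1-s)) := by
    field_simp
  rw [heq]
  apply mul_le_mul_of_nonneg_right h (by positivity)

lemma aux_bound2 {k : ℝ} (hk : 0 < k) {s : ℝ} (hs : s ∈ Set.Ioo (0:ℝ) 1) :
    Real.exp (-k/s) * (1/(Real.sqrt s * Real.sqrt (1-s)))
      ≤ (6/k^3) * (1/Real.sqrt (1-s)) := by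
  refine le_trans ?_ (aux_bound3 hk hs)
  obtain ⟨hs0, hs1⟩ := hs
  have h1 : (1:ℝ) ≤ 1/s := by rw [le_div_iff₀ hs0]; linarith
  have h2 : (0:ℝ) ≤ Real.exp (-k/s) * (1/(Real.sqrt s * Real.sqrt (1-s))) := by positivity
  nlinarith

set_option maxHeartbeats 1000000 in
lemma keyDeriv (c t : ℝ) (hc : 0 < c) (ht : 0 < t) :
    HasDerivAt (fun t' => ∫ s in Set.Ioo (0:ℝ) 1,
        Real.exp (-c/(t'*s)) * (1/(Real.sqrt s * Real.sqrt (1-s))))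
      (∫ s in Set.Ioo (0:ℝ) 1,
        (c/(t^2*s)) * (Real.exp (-c/(t*s)) * (1/(Real.sqrt s * Real.sqrt (1-s))))) t := by
  set μ := volume.restrict (Set.Ioo (0:ℝ) 1) with hμ
  have msqrt : Measurable fun s : ℝ => 1/(Real.sqrt s * Real.sqrt (1-s)) :=
    measurable_const.div (Real.continuous_sqrt.measurable.mul
      ((Real.continuous_sqrt.comp (continuous_const.sub continuous_id)).measurable))
  have mexp : ∀ x : ℝ, Measurable fun s : ℝ => Real.exp (-c/(x*s)) := fun x =>
    Real.continuous_exp.measurable.comp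
      (measurable_const.div (measurable_const.mul measurable_id))
  have hmeas : ∀ x : ℝ, AEStronglyMeasurable
      (fun s => Real.exp (-c/(x*s)) * (1/(Real.sqrt s * Real.sqrt (1-s)))) μ := fun x =>
    ((mexp x).mul msqrt).aestronglyMeasurable
  have hmeas' : AEStronglyMeasurable
      (fun s => (c/(t^2*s)) * (Real.exp (-c/(t*s)) * (1/(Real.sqrt s * Real.sqrt (1-s))))) μ :=
    ((measurable_const.div (measurable_const.mul measurable_id)).mul
      ((mexp t).mul msqrt)).aestronglyMeasurable
  set B : ℝ := (4*c/t^2) * (6/(2*c/(3*t))^3) with hB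
  have hbound_int : Integrable (fun s => B * (1/Real.sqrt (1-s))) μ :=
    aux_integrable.const_mul B
  have hint : Integrable (fun s => Real.exp (-c/(t*s)) * (1/(Real.sqrt s * Real.sqrt (1-s)))) μ := by
    apply Integrable.mono (aux_integrable.const_mul (6/(c/t)^3)) (hmeas t)
    rw [ae_restrict_iff' measurableSet_Ioo]
    filter_upwards with s hs
    obtain ⟨hs0, hs1⟩ := hs
    have hkt : (0:ℝ) < c/t := by positivity
    have h1s : (0:ℝ) < 1 - s := by linarith
    rw [Real.norm_eq_abs, Real.norm_eq_abs, abs_of_nonneg (by positivity),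
      abs_of_nonneg (by positivity)]
    have : -c/(t*s) = -(c/t)/s := by rw [neg_div, neg_div, div_div]
    rw [this]
    exact aux_bound2 hkt ⟨hs0, hs1⟩
  have hε : (0:ℝ) < t/2 := by positivity
  have hball : ∀ x ∈ Metric.ball t (t/2), t/2 < x ∧ x < 3*t/2 := by
    intro x hx
    rw [Metric.mem_ball, Real.dist_eq, abs_sub_lt_iff] at hx
    constructor <;> linarith [hx.1, hx.2]
  have hbound : ∀ᵐ s ∂μ, ∀ x ∈ Metric.ball t (t/2),
      ‖(c/(x^2*s)) * (Real.exp (-c/(x*s)) * (1/(Real.sqrt s * Real.sqrt (1-s))))‖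
        ≤ B * (1/Real.sqrt (1-s)) := by
    rw [ae_restrict_iff' measurableSet_Ioo]
    filter_upwards with s hs x hx
    obtain ⟨hs0, hs1⟩ := hs
    obtain ⟨hx1, hx2⟩ := hball x hx
    have hx0 : (0:ℝ) < x := by linarith
    have h1s : (0:ℝ) < 1 - s := by linarith
    have hk' : (0:ℝ) < 2*c/(3*t) := by positivity
    rw [Real.norm_eq_abs, abs_of_nonneg (by positivity)]
    have step1 : (c/(x^2*s)) * (Real.exp (-c/(x*s)) * (1/(Real.sqrt s * Real.sqrt (1-s))))
        = (c/x^2) * ((1/s) * (Real.exp (-(c/x)/s) * (1/(Real.sqrt s * Real.sqrt (1-s))))) := by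
      rw [show -(c/x)/s = -c/(x*s) by rw [neg_div, neg_div, div_div]]
      field_simp
    rw [step1]
    have hmono : Real.exp (-(c/x)/s) ≤ Real.exp (-(2*c/(3*t))/s) := by
      apply Real.exp_le_exp.mpr
      have h9 : 2*c/(3*t) ≤ c/x := by
        rw [div_le_div_iff₀ (by positivity) hx0]
        nlinarith
      rw [neg_div, neg_div, neg_le_neg_iff]
      gcongr
    have step2 : (1/s) * (Real.exp (-(c/x)/s) * (1/(Real.sqrt s * Real.sqrt (1-s))))
        ≤ (6/(2*c/(3*t))^3) * (1/Real.sqrt (1-s)) := by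
      refine le_trans ?_ (aux_bound3 hk' ⟨hs0, hs1⟩)
      have : (0:ℝ) ≤ (1/s) * (1/(Real.sqrt s * Real.sqrt (1-s))) := by positivity
      nlinarith [Real.exp_pos (-(2*c/(3*t))/s)]
    have hcx : c/x^2 ≤ 4*c/t^2 := by
      rw [div_le_div_iff₀ (by positivity) (by positivity)]
      nlinarith [mul_nonneg hc.le (mul_pos (show (0:ℝ) < 2*x - t by linarith)
        (show (0:ℝ) < 2*x + t by linarith)).le]
    rw [hB]
    calc (c/x^2) * ((1/s) * (Real.exp (-(c/x)/s) * (1/(Real.sqrt s * Real.sqrt (1-s)))))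
        ≤ (c/x^2) * ((6/(2*c/(3*t))^3) * (1/Real.sqrt (1-s))) := by
          apply mul_le_mul_of_nonneg_left step2 (by positivity)
      _ ≤ (4*c/t^2) * ((6/(2*c/(3*t))^3) * (1/Real.sqrt (1-s))) := by
          apply mul_le_mul_of_nonneg_right hcx (by positivity)
      _ = (4*c/t^2) * (6/(2*c/(3*t))^3) * (1/Real.sqrt (1-s)) := by ring
  have hdiff : ∀ᵐ s ∂μ, ∀ x ∈ Metric.ball t (t/2),
      HasDerivAt (fun x' => Real.exp (-c/(x'*s)) * (1/(Real.sqrt s * Real.sqrt (1-s))))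
        ((c/(x^2*s)) * (Real.exp (-c/(x*s)) * (1/(Real.sqrt s * Real.sqrt (1-s))))) x := by
    rw [ae_restrict_iff' measurableSet_Ioo]
    filter_upwards with s hs x hx
    obtain ⟨hs0, hs1⟩ := hs
    obtain ⟨hx1, hx2⟩ := hball x hx
    have hx0 : (0:ℝ) < x := by linarith
    have hxs : x * s ≠ 0 := by positivity
    have h1 : HasDerivAt (fun x' : ℝ => x' * s) s x := by
      simpa using (hasDerivAt_id x).mul_const s
    have h2 : HasDerivAt (fun x' : ℝ => -c/(x'*s))
        ((0 * (x*s) - (-c) * s)/(x*s)^2) x :=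
      (hasDerivAt_const x (-c)).div h1 hxs
    have h4 : (0 * (x * s) - -c * s) / (x * s) ^ 2 = c/(x^2*s) := by
      rw [div_eq_div_iff (by positivity) (by positivity)]
      ring
    rw [h4] at h2
    have h3 := (h2.exp).mul_const (1/(Real.sqrt s * Real.sqrt (1-s)))
    exact h3.congr_deriv (by ring)
  have main := hasDerivAt_integral_of_dominated_loc_of_deriv_le (μ := μ)
    (F := fun x s => Real.exp (-c/(x*s)) * (1/(Real.sqrt s * Real.sqrt (1-s))))
    (F' := fun x s => (c/(x^2*s)) * (Real.exp (-c/(x*s)) * (1/(Real.sqrt s * Real.sqrt (1-s)))))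
    (bound := fun s => B * (1/Real.sqrt (1-s)))
    (Metric.ball_mem_nhds t hε) (Filter.Eventually.of_forall hmeas) hint hmeas' hbound hbound_int hdiff
  exact main.2

theorem stmt19 (a₁ a₂ q : ℝ) (ha₁ : 0 < a₁) (ha₂ : 0 < a₂) (hq : q ≠ 0) :
    ∀ t > (0 : ℝ),
      -(Real.sqrt a₁ / (π * (Real.sqrt a₁ + Real.sqrt a₂))) *
          deriv (fun t' => ∫ τ in Set.Ioo (0 : ℝ) t',
            Real.exp (-q ^ 2 / (4 * a₂ * τ)) * (1 / (Real.sqrt τ * Real.sqrt (t' - τ)))) t =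
        -(Real.sqrt a₁ / (Real.sqrt a₁ + Real.sqrt a₂)) *
          (|q| / (2 * Real.sqrt (π * a₂))) * t ^ (-(3 : ℝ) / 2) *
          Real.exp (-q ^ 2 / (4 * a₂ * t)) := by
  intro t ht
  set c : ℝ := q^2/(4*a₂) with hcdef
  have hq2 : (0:ℝ) < q^2 := lt_of_le_of_ne (sq_nonneg q) (Ne.symm (pow_ne_zero 2 hq))
  have hc : 0 < c := div_pos hq2 (by positivity)
  have hrw : ∀ τ : ℝ, -q^2/(4*a₂*τ) = -c/τ := by
    intro τ
    rw [hcdef, neg_div, neg_div, div_div]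
  have heq : (fun t' => ∫ τ in Set.Ioo (0:ℝ) t',
        Real.exp (-q^2/(4*a₂*τ)) * (1/(Real.sqrt τ * Real.sqrt (t'-τ)))) =ᶠ[nhds t]
      (fun t' => ∫ s in Set.Ioo (0:ℝ) 1,
        Real.exp (-c/(t'*s)) * (1/(Real.sqrt s * Real.sqrt (1-s)))) := by
    filter_upwards [eventually_gt_nhds ht] with x hx
    rw [← subst1 c x hx]
    simp only [hrw]
  rw [Filter.EventuallyEq.deriv_eq heq, (keyDeriv c t hc ht).deriv, subst2 c t hc ht,
    hrw t]
  have hsc : Real.sqrt c = |q|/(2*Real.sqrt a₂) := by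
    rw [hcdef, show (4:ℝ)*a₂ = 2^2*a₂ by norm_num, Real.sqrt_div (sq_nonneg q),
      Real.sqrt_mul (by norm_num : (0:ℝ) ≤ (2:ℝ)^2),
      Real.sqrt_sq (by norm_num : (0:ℝ) ≤ (2:ℝ)), Real.sqrt_sq_eq_abs]
  have hpa : Real.sqrt (π*a₂) = Real.sqrt π * Real.sqrt a₂ := Real.sqrt_mul pi_pos.le _
  rw [hsc, hpa]
  have hpp : Real.sqrt π * Real.sqrt π = π := Real.mul_self_sqrt pi_pos.le
  set sπ := Real.sqrt π with hsπ
  rw [← hpp]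
  have h1 : (0:ℝ) < Real.sqrt a₁ + Real.sqrt a₂ := by positivity
  have h2 : sπ ≠ 0 := by rw [hsπ]; positivity
  have h3 : Real.sqrt a₂ ≠ 0 := by positivity
  field_simp
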